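/- arXiv:0801.1844 — 6 statements merged into one kernel-verified Lean document; each statement's English description precedes it below -/
import Mathlib

section
/- If f is holomorphic on an open subset V of the complex plane, Ω is a connected open set, and σ₁, σ₂ : Ω → V are holomorphic branches of f⁻¹ (i.e., f(σᵢ(w)) = w for all w ∈ Ω), then either σ₁(Ω) ∩ σ₂(Ω) = ∅ or σ₁ = σ₂ on all of Ω. -/
open Set

/-- If `f` is holomorphic on an open set `V ⊆ ℂ` and `σ₁, σ₂` are holomorphic branches of
`f⁻¹` defined on a connected open set `Ω` (with values in `V`), then either the images
`σ₁(Ω)` and `σ₂(Ω)` are disjoint, or `σ₁ ≡ σ₂` on `Ω`. -/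
theorem stmt_0 (V Ω : Set ℂ) (hV : IsOpen V) (hΩo : IsOpen Ω) (hΩc : IsConnected Ω)
    (f σ₁ σ₂ : ℂ → ℂ) (hf : DifferentiableOn ℂ f V)
    (h1 : DifferentiableOn ℂ σ₁ Ω) (h2 : DifferentiableOn ℂ σ₂ Ω)
    (m1 : MapsTo σ₁ Ω V) (m2 : MapsTo σ₂ Ω V)
    (hi1 : ∀ w ∈ Ω, f (σ₁ w) = w) (hi2 : ∀ w ∈ Ω, f (σ₂ w) = w) :
    σ₁ '' Ω ∩ σ₂ '' Ω = ∅ ∨ EqOn σ₁ σ₂ Ω := by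
  rcases eq_empty_or_nonempty (σ₁ '' Ω ∩ σ₂ '' Ω) with h | ⟨z, ⟨w1, hw1, e1⟩, ⟨w2, hw2, e2⟩⟩
  · exact Or.inl h
  right
  -- the two preimage points coincide
  have hw : w1 = w2 := by rw [← hi1 w1 hw1, ← hi2 w2 hw2, e1, e2]
  subst hw
  have heq : σ₁ w1 = σ₂ w1 := by rw [e1, e2]
  have hzV : z ∈ V := e1 ▸ m1 hw1
  -- f is analytic, hence strictly differentiable, at z
  have hfa : AnalyticAt ℂ f z := (hf.analyticOnNhd hV) z hzV
  have hfs : HasStrictDerivAt f (deriv f z) z := by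
    rcases hfa with ⟨p, hp⟩
    simpa [hp.deriv] using hp.hasStrictDerivAt
  -- chain rule shows deriv f z ≠ 0
  have hΩn : Ω ∈ nhds w1 := hΩo.mem_nhds hw1
  have hσ1 : HasDerivAt σ₁ (deriv σ₁ w1) w1 :=
    ((h1 w1 hw1).differentiableAt hΩn).hasDerivAt
  have hcomp : HasDerivAt (f ∘ σ₁) (deriv f z * deriv σ₁ w1) w1 := by
    have := (e1 ▸ hfs.hasDerivAt : HasDerivAt f (deriv f z) (σ₁ w1))
    exact this.comp w1 hσ1
  have hid : HasDerivAt (f ∘ σ₁) 1 w1 := by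
    have : (f ∘ σ₁) =ᶠ[nhds w1] id := by
      filter_upwards [hΩn] with w hw using hi1 w hw
    exact (hasDerivAt_id w1).congr_of_eventuallyEq this
  have hne : deriv f z ≠ 0 := by
    have h11 : deriv f z * deriv σ₁ w1 = 1 := hcomp.unique hid
    intro h0
    rw [h0, zero_mul] at h11
    exact one_ne_zero h11.symm
  -- local inverse of f near z
  set g : ℂ → ℂ := hfs.localInverse f (deriv f z) z hne with hg
  have hgl : ∀ᶠ x in nhds z, g (f x) = x :=
    (hfs.hasStrictFDerivAt_equiv hne).eventually_left_inverse
  -- σ₁ and σ₂ are continuous at w1 and map w1 to z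
  have c1 : Filter.Tendsto σ₁ (nhds w1) (nhds z) := by
    have := ((h1 w1 hw1).differentiableAt hΩn).continuousAt
    rwa [ContinuousAt, e1] at this
  have c2 : Filter.Tendsto σ₂ (nhds w1) (nhds z) := by
    have := ((h2 w1 hw1).differentiableAt hΩn).continuousAt
    rwa [ContinuousAt, e2] at this
  have hev : σ₁ =ᶠ[nhds w1] σ₂ := by
    filter_upwards [hΩn, c1.eventually hgl, c2.eventually hgl] with w hwΩ hg1 hg2
    rw [hi1 w hwΩ] at hg1
    rw [hi2 w hwΩ] at hg2
    rw [← hg1, ← hg2]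
  exact (h1.analyticOnNhd hΩo).eqOn_of_preconnected_of_eventuallyEq
    (h2.analyticOnNhd hΩo) hΩc.isPreconnected hw1 hev
end

section
/- Let φ be a rational function mapping the open unit disc 𝕌 into itself, and define the exterior map φₑ(w) = 1/conj(φ(1/conj(w))). Then the preimage under φₑ of the open unit disc is contained in the open unit disc: if φₑ(w) ∈ 𝕌 then w ∈ 𝕌. -/
open Metric

/-- If `φ` is a rational function mapping the open unit disc `𝕌` into itself, and
`φₑ(w) = 1/conj(φ(1/conj w))` is the exterior map, then `φₑ⁻¹(𝕌) ⊆ 𝕌`: whenever the value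
`φ(1/conj w)` is genuinely defined and nonzero (so that the formula for `φₑ(w)` represents
the honest value on the Riemann sphere) and `φₑ(w) ∈ 𝕌`, one has `w ∈ 𝕌`. -/
theorem stmt_1 (p q : Polynomial ℂ) (hq : q ≠ 0)
    (φ : ℂ → ℂ) (hφ : ∀ z, φ z = p.eval z / q.eval z)
    (hmaps : Set.MapsTo φ (ball 0 1) (ball 0 1))
    (w : ℂ) (hw0 : φ ((starRingEnd ℂ) w)⁻¹ ≠ 0)
    (hwe : ((starRingEnd ℂ) (φ ((starRingEnd ℂ) w)⁻¹))⁻¹ ∈ ball (0 : ℂ) 1) :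
    w ∈ ball (0 : ℂ) 1 := by
  by_contra hw
  rw [mem_ball_zero_iff, not_lt] at hw
  set z : ℂ := ((starRingEnd ℂ) w)⁻¹ with hz
  -- ‖z‖ ≤ 1
  have hznorm : ‖z‖ ≤ 1 := by
    rw [hz, norm_inv, RCLike.norm_conj]
    exact inv_le_one_of_one_le₀ hw
  -- denominator nonzero at z
  have hqz : q.eval z ≠ 0 := by
    intro h0
    apply hw0
    rw [hφ, h0, div_zero]
  -- φ is continuous at z
  have hc : ContinuousWithinAt φ (ball (0:ℂ) 1) z := by
    have : ContinuousAt φ z := by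
      have : ContinuousAt (fun x => p.eval x / q.eval x) z :=
        (p.continuousAt).div (q.continuousAt) hqz
      exact this.congr (by filter_upwards with x using (hφ x).symm)
    exact this.continuousWithinAt
  have hzcl : z ∈ closure (ball (0:ℂ) 1) := by
    rw [closure_ball (0:ℂ) one_ne_zero, mem_closedBall_zero_iff]
    exact hznorm
  have himg : φ z ∈ closure (ball (0:ℂ) 1) := by
    have h1 : φ z ∈ closure (φ '' ball (0:ℂ) 1) := hc.mem_closure_image hzcl
    exact closure_mono hmaps.image_subset h1
  rw [closure_ball (0:ℂ) one_ne_zero, mem_closedBall_zero_iff] at himg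
  -- hwe forces ‖φ z‖ > 1
  rw [mem_ball_zero_iff, norm_inv, RCLike.norm_conj] at hwe
  have hpos : 0 < ‖φ z‖ := norm_pos_iff.mpr hw0
  have : 1 < ‖φ z‖ := by
    have := (inv_lt_one₀ hpos).mp hwe
    linarith [this]
  linarith
end

section
/- A finite Blaschke product of degree d ≥ 2 has at least one critical point in the exterior of the closed unit disc, and consequently a critical value of modulus greater than 1; in particular, no finite Blaschke product of degree ≥ 2 is outer regular. -/
open Polynomial

private lemma normSq_lt_one_iff' {α : ℂ} : ‖α‖ < 1 ↔ Complex.normSq α < 1 := by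
  rw [← Complex.sq_norm]
  constructor
  · intro h; nlinarith [norm_nonneg α]
  · intro h; nlinarith [norm_nonneg α]

private lemma blaschke_norm_lt' {α w : ℂ} (ha : ‖α‖ < 1) (hw : 1 < ‖w‖) :
    ‖1 - (starRingEnd ℂ) α * w‖ < ‖α - w‖ := by
  have h1 : Complex.normSq α < 1 := normSq_lt_one_iff'.mp ha
  have h2 : 1 < Complex.normSq w := by
    rw [← Complex.sq_norm]; nlinarith
  have key : Complex.normSq (1 - (starRingEnd ℂ) α * w) < Complex.normSq (α - w) := by
    simp only [Complex.normSq_apply, Complex.sub_re, Complex.sub_im, Complex.mul_re,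
      Complex.mul_im, Complex.one_re, Complex.one_im, Complex.conj_re, Complex.conj_im] at *
    nlinarith [mul_pos (sub_pos.mpr h1) (sub_pos.mpr h2)]
  rw [Complex.norm_def, Complex.norm_def]
  exact Real.sqrt_lt_sqrt (Complex.normSq_nonneg _) key

private lemma value_lemma' (d : ℕ) (hd : 2 ≤ d) (ω : ℂ) (hω : ‖ω‖ = 1)
    (a : Fin d → ℂ) (ha : ∀ j, ‖a j‖ < 1)
    (P Q : Polynomial ℂ)
    (hP : P = C ω * ∏ j, (C (a j) - X))
    (hQ : Q = ∏ j, (1 - C ((starRingEnd ℂ) (a j)) * X))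
    (w : ℂ) (hw : 1 < ‖w‖) :
    Q.eval w = 0 ∨ 1 < ‖P.eval w / Q.eval w‖ := by
  by_cases hQw : Q.eval w = 0
  · exact Or.inl hQw
  right
  have hQev : Q.eval w = ∏ j, (1 - (starRingEnd ℂ) (a j) * w) := by
    simp [hQ, eval_prod]
  have hPev : P.eval w = ω * ∏ j, (a j - w) := by
    simp [hP, eval_prod]
  have hfac : ∀ j : Fin d, (1 : ℂ) - (starRingEnd ℂ) (a j) * w ≠ 0 := by
    rw [hQev] at hQw
    intro j
    exact fun h => hQw (Finset.prod_eq_zero (Finset.mem_univ j) h)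
  have hpos : ∀ j : Fin d, 0 < ‖(1 : ℂ) - (starRingEnd ℂ) (a j) * w‖ :=
    fun j => norm_pos_iff.mpr (hfac j)
  have hlt : ∀ j : Fin d, ‖(1 : ℂ) - (starRingEnd ℂ) (a j) * w‖ < ‖a j - w‖ :=
    fun j => blaschke_norm_lt' (ha j) hw
  have hne : (Finset.univ : Finset (Fin d)).Nonempty := by
    have : Nonempty (Fin d) := Fin.pos_iff_nonempty.mp (by omega)
    exact Finset.univ_nonempty
  have h1 : ∏ j, ‖(1 : ℂ) - (starRingEnd ℂ) (a j) * w‖ < ∏ j, ‖a j - w‖ :=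
    Finset.prod_lt_prod_of_nonempty (fun i _ => hpos i) (fun i _ => hlt i) hne
  have h2 : 0 < ∏ j, ‖(1 : ℂ) - (starRingEnd ℂ) (a j) * w‖ :=
    Finset.prod_pos fun i _ => hpos i
  rw [hQev, hPev, norm_div, norm_mul, hω, one_mul, norm_prod, norm_prod]
  rw [lt_div_iff₀ h2]; linarith

private lemma pderiv_finset_prod' {ι : Type*} [DecidableEq ι] (s : Finset ι) (f : ι → ℂ[X]) :
    derivative (∏ i ∈ s, f i) = ∑ i ∈ s, (∏ j ∈ s.erase i, f j) * derivative (f i) := by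
  rw [Finset.prod_eq_multiset_prod, derivative_prod, Finset.sum_eq_multiset_sum]
  congr 1

private lemma W_eval' (d : ℕ) (ω : ℂ) (a : Fin d → ℂ) (P Q W : Polynomial ℂ)
    (hP : P = C ω * ∏ j, (C (a j) - X))
    (hQ : Q = ∏ j, (1 - C ((starRingEnd ℂ) (a j)) * X))
    (hW : W = derivative P * Q - P * derivative Q) (z : ℂ) :
    W.eval z = ω * ∑ j, (a j * (starRingEnd ℂ) (a j) - 1) *
        ∏ k ∈ Finset.univ.erase j, ((a k - z) * (1 - (starRingEnd ℂ) (a k) * z)) := by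
  have hdP : derivative (∏ j, (C (a j) - X) : ℂ[X])
      = ∑ j, (∏ k ∈ Finset.univ.erase j, (C (a k) - X)) * (-1) := by
    rw [pderiv_finset_prod']; congr 1; funext j; simp
  have hdQ : derivative (∏ j, (1 - C ((starRingEnd ℂ) (a j)) * X) : ℂ[X])
      = ∑ j, (∏ k ∈ Finset.univ.erase j, (1 - C ((starRingEnd ℂ) (a k)) * X))
          * (-C ((starRingEnd ℂ) (a j))) := by
    rw [pderiv_finset_prod']; congr 1; funext j; simp
  have key : (∑ j, (∏ k ∈ Finset.univ.erase j, (C (a k) - X)) * (-1 : ℂ[X]))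
        * (∏ j, (1 - C ((starRingEnd ℂ) (a j)) * X))
      - (∏ j, (C (a j) - X))
        * ∑ j, (∏ k ∈ Finset.univ.erase j, (1 - C ((starRingEnd ℂ) (a k)) * X))
            * (-C ((starRingEnd ℂ) (a j)))
      = ∑ j, C (a j * (starRingEnd ℂ) (a j) - 1) *
          ∏ k ∈ Finset.univ.erase j, ((C (a k) - X) * (1 - C ((starRingEnd ℂ) (a k)) * X)) := by
    rw [Finset.sum_mul, Finset.mul_sum, ← Finset.sum_sub_distrib]
    apply Finset.sum_congr rfl
    intro j _
    rw [← Finset.mul_prod_erase Finset.univ (fun k => (C (a k) - X)) (Finset.mem_univ j),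
      ← Finset.mul_prod_erase Finset.univ (fun k => (1 - C ((starRingEnd ℂ) (a k)) * X))
        (Finset.mem_univ j),
      Finset.prod_mul_distrib]
    have hc : (C (a j * (starRingEnd ℂ) (a j) - 1) : ℂ[X])
        = C (a j) * C ((starRingEnd ℂ) (a j)) - 1 := by
      rw [map_sub, map_mul, map_one]
    rw [hc]; ring
  have hWpoly : W = C ω * ∑ j, C (a j * (starRingEnd ℂ) (a j) - 1) *
        ∏ k ∈ Finset.univ.erase j, ((C (a k) - X) * (1 - C ((starRingEnd ℂ) (a k)) * X)) := by
    rw [hW, hP, hQ, derivative_C_mul, hdP, hdQ]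
    linear_combination (C ω : ℂ[X]) * key
  rw [hWpoly]
  simp [eval_finset_sum, eval_prod]

private lemma E_lemma' (d : ℕ) (ω : ℂ) (a : Fin d → ℂ) (W : Polynomial ℂ)
    (hWE : ∀ z : ℂ, W.eval z = ω * ∑ j, (a j * (starRingEnd ℂ) (a j) - 1) *
        ∏ k ∈ Finset.univ.erase j, ((a k - z) * (1 - (starRingEnd ℂ) (a k) * z)))
    (hω : ‖ω‖ = 1) (z : ℂ) (hz : z ≠ 0) :
    ((starRingEnd ℂ) z) ^ (2 * d - 2) * W.eval (((starRingEnd ℂ) z)⁻¹)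
      = ω ^ 2 * (starRingEnd ℂ) (W.eval z) := by
  set u := (starRingEnd ℂ) z with hu
  have hu0 : u ≠ 0 := by simp [hu, hz]
  have hωc : ω * (starRingEnd ℂ) ω = 1 := by
    rw [Complex.mul_conj]
    norm_cast
    rw [← Complex.sq_norm, hω]; norm_num
  have hcard : ∀ j : Fin d, (Finset.univ.erase j).card = d - 1 := by
    intro j
    rw [Finset.card_erase_of_mem (Finset.mem_univ j), Finset.card_univ, Fintype.card_fin]
  have hfac : ∀ k : Fin d, (a k - u⁻¹) * (1 - (starRingEnd ℂ) (a k) * u⁻¹)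
      = u⁻¹ * u⁻¹ * (starRingEnd ℂ) ((a k - z) * (1 - (starRingEnd ℂ) (a k) * z)) := by
    intro k
    have hconj : (starRingEnd ℂ) ((a k - z) * (1 - (starRingEnd ℂ) (a k) * z))
        = ((starRingEnd ℂ) (a k) - u) * (1 - a k * u) := by
      simp [map_mul, map_sub, map_one, hu]
    rw [hconj]
    field_simp
    ring
  have hterm : ∀ j : Fin d,
      (a j * (starRingEnd ℂ) (a j) - 1) *
        ∏ k ∈ Finset.univ.erase j, ((a k - u⁻¹) * (1 - (starRingEnd ℂ) (a k) * u⁻¹))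
      = (u⁻¹ * u⁻¹) ^ (d - 1) * (starRingEnd ℂ)
          ((a j * (starRingEnd ℂ) (a j) - 1) *
            ∏ k ∈ Finset.univ.erase j, ((a k - z) * (1 - (starRingEnd ℂ) (a k) * z))) := by
    intro j
    rw [Finset.prod_congr rfl (fun k _ => hfac k), Finset.prod_mul_distrib,
      Finset.prod_const, hcard j, map_mul, map_prod]
    have hcj : (starRingEnd ℂ) (a j * (starRingEnd ℂ) (a j) - 1)
        = a j * (starRingEnd ℂ) (a j) - 1 := by
      simp [map_sub, map_mul]; ring
    rw [hcj]
    ring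
  have hω0 : ω ≠ 0 := by
    intro h; rw [h] at hω; simp at hω
  have hωconj : (starRingEnd ℂ) ω = ω⁻¹ := (inv_eq_of_mul_eq_one_right hωc).symm
  have hpow : u ^ (2 * d - 2) * (u⁻¹ * u⁻¹) ^ (d - 1) = 1 := by
    rw [show 2 * d - 2 = 2 * (d - 1) by omega, pow_mul, ← mul_pow]
    rw [show u ^ 2 * (u⁻¹ * u⁻¹) = 1 by field_simp, one_pow]
  rw [hWE, hWE z]
  rw [Finset.sum_congr rfl (fun j _ => hterm j), ← Finset.mul_sum, ← map_sum, map_mul]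
  set S := (starRingEnd ℂ) (∑ j, (a j * (starRingEnd ℂ) (a j) - 1) *
    ∏ k ∈ Finset.univ.erase j, ((a k - z) * (1 - (starRingEnd ℂ) (a k) * z))) with hS
  calc u ^ (2 * d - 2) * (ω * ((u⁻¹ * u⁻¹) ^ (d - 1) * S))
      = (u ^ (2 * d - 2) * (u⁻¹ * u⁻¹) ^ (d - 1)) * (ω * S) := by ring
    _ = ω * S := by rw [hpow, one_mul]
    _ = ω ^ 2 * ((starRingEnd ℂ) ω * S) := by rw [hωconj]; field_simp

private lemma circle_lemma' (d : ℕ) (hd : 2 ≤ d) (ω : ℂ) (hω : ‖ω‖ = 1)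
    (a : Fin d → ℂ) (ha : ∀ j, ‖a j‖ < 1) (W : Polynomial ℂ)
    (hWE : ∀ z : ℂ, W.eval z = ω * ∑ j, (a j * (starRingEnd ℂ) (a j) - 1) *
        ∏ k ∈ Finset.univ.erase j, ((a k - z) * (1 - (starRingEnd ℂ) (a k) * z)))
    (z : ℂ) (hz1 : ‖z‖ = 1) : W.eval z ≠ 0 := by
  have hz0 : z ≠ 0 := by intro h; rw [h] at hz1; simp at hz1
  have hω0 : ω ≠ 0 := by intro h; rw [h] at hω; simp at hω
  have hcard : ∀ j : Fin d, (Finset.univ.erase j).card = d - 1 := fun j => by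
    rw [Finset.card_erase_of_mem (Finset.mem_univ j), Finset.card_univ, Fintype.card_fin]
  have hzz : z * (starRingEnd ℂ) z = 1 := by
    rw [Complex.mul_conj]
    norm_cast
    rw [← Complex.sq_norm, hz1]; norm_num
  have hfac : ∀ k : Fin d, (a k - z) * (1 - (starRingEnd ℂ) (a k) * z)
      = (-z) * ((Complex.normSq (a k - z) : ℝ) : ℂ) := by
    intro k
    have h1 : ((Complex.normSq (a k - z) : ℝ) : ℂ) = (a k - z) * (starRingEnd ℂ) (a k - z) :=
      (Complex.mul_conj _).symm
    rw [h1, map_sub]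
    linear_combination (z - a k) * hzz
  have hterm : ∀ j : Fin d,
      (a j * (starRingEnd ℂ) (a j) - 1) *
        ∏ k ∈ Finset.univ.erase j, ((a k - z) * (1 - (starRingEnd ℂ) (a k) * z))
      = (-z) ^ (d - 1) * (((Complex.normSq (a j) - 1) *
          ∏ k ∈ Finset.univ.erase j, Complex.normSq (a k - z) : ℝ) : ℂ) := by
    intro j
    rw [Finset.prod_congr rfl (fun k _ => hfac k), Finset.prod_mul_distrib,
      Finset.prod_const, hcard j]
    have h2 : (a j * (starRingEnd ℂ) (a j) - 1 : ℂ) = ((Complex.normSq (a j) - 1 : ℝ) : ℂ) := by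
      push_cast
      rw [← Complex.mul_conj]
    rw [h2]
    push_cast
    ring
  have hS : (∑ j, (Complex.normSq (a j) - 1) *
      ∏ k ∈ Finset.univ.erase j, Complex.normSq (a k - z)) < 0 := by
    have hne : (Finset.univ : Finset (Fin d)).Nonempty := by
      have : Nonempty (Fin d) := Fin.pos_iff_nonempty.mp (by omega)
      exact Finset.univ_nonempty
    have hterms : ∀ j ∈ (Finset.univ : Finset (Fin d)), (Complex.normSq (a j) - 1) *
        ∏ k ∈ Finset.univ.erase j, Complex.normSq (a k - z) < 0 := by
      intro j _
      apply mul_neg_of_neg_of_pos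
      · have : Complex.normSq (a j) < 1 := by
          rw [← Complex.sq_norm]
          nlinarith [ha j, norm_nonneg (a j)]
        linarith
      · apply Finset.prod_pos
        intro k _
        apply Complex.normSq_pos.mpr
        intro h
        have hk : a k = z := sub_eq_zero.mp h
        have := ha k
        rw [hk, hz1] at this
        exact lt_irrefl 1 this
    calc (∑ j, (Complex.normSq (a j) - 1) * ∏ k ∈ Finset.univ.erase j, Complex.normSq (a k - z))
        < ∑ _j : Fin d, (0:ℝ) := Finset.sum_lt_sum_of_nonempty hne hterms
      _ = 0 := by simp
  rw [hWE, Finset.sum_congr rfl (fun j _ => hterm j), ← Finset.mul_sum, ← Complex.ofReal_sum]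
  apply mul_ne_zero hω0
  apply mul_ne_zero (pow_ne_zero _ (neg_ne_zero.mpr hz0))
  exact Complex.ofReal_ne_zero.mpr (ne_of_lt hS)

private lemma lc_lemma' (d : ℕ) (hd : 2 ≤ d) (ω : ℂ) (hω : ‖ω‖ = 1)
    (a : Fin d → ℂ) (ha : ∀ j, ‖a j‖ < 1)
    (P Q : Polynomial ℂ)
    (hP : P = C ω * ∏ j, (C (a j) - X))
    (hQ : Q = ∏ j, (1 - C ((starRingEnd ℂ) (a j)) * X)) :
    Q.natDegree < d ∨ 1 < ‖P.leadingCoeff / Q.leadingCoeff‖ := by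
  have hne : (Finset.univ : Finset (Fin d)).Nonempty := by
    have : Nonempty (Fin d) := Fin.pos_iff_nonempty.mp (by omega)
    exact Finset.univ_nonempty
  by_cases h0 : ∃ j, a j = 0
  · left
    obtain ⟨j, hj⟩ := h0
    have h1 : Q.natDegree ≤ ∑ k, (1 - C ((starRingEnd ℂ) (a k)) * X).natDegree := by
      rw [hQ]; exact natDegree_prod_le _ _
    have h2 : (1 - C ((starRingEnd ℂ) (a j)) * X).natDegree = 0 := by
      rw [hj]; simp
    have h3 : ∑ k, (1 - C ((starRingEnd ℂ) (a k)) * X).natDegree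
        = (1 - C ((starRingEnd ℂ) (a j)) * X).natDegree
          + ∑ k ∈ Finset.univ.erase j, (1 - C ((starRingEnd ℂ) (a k)) * X).natDegree :=
      (Finset.add_sum_erase _ _ (Finset.mem_univ j)).symm
    have h4 : ∑ k ∈ Finset.univ.erase j, (1 - C ((starRingEnd ℂ) (a k)) * X).natDegree
        ≤ (Finset.univ.erase j).card • 1 := by
      apply Finset.sum_le_card_nsmul
      intro k _
      calc (1 - C ((starRingEnd ℂ) (a k)) * X).natDegree
          = (C (-(starRingEnd ℂ) (a k)) * X + C 1).natDegree := by
            congr 1; rw [map_one, map_neg]; ring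
        _ ≤ 1 := natDegree_linear_le
    have h5 : (Finset.univ.erase j).card = d - 1 := by
      rw [Finset.card_erase_of_mem (Finset.mem_univ j), Finset.card_univ, Fintype.card_fin]
    rw [h5, smul_eq_mul, mul_one] at h4
    omega
  · right
    push_neg at h0
    have hPlc : ‖P.leadingCoeff‖ = 1 := by
      rw [hP, leadingCoeff_mul, leadingCoeff_C, leadingCoeff_prod]
      rw [norm_mul, hω, one_mul, norm_prod]
      have hone : ∀ j : Fin d, ‖(C (a j) - X : ℂ[X]).leadingCoeff‖ = 1 := by
        intro j
        have : (C (a j) - X : ℂ[X]) = -(X - C (a j)) := by ring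
        rw [this, leadingCoeff_neg, leadingCoeff_X_sub_C, norm_neg, norm_one]
      rw [Finset.prod_congr rfl (fun j _ => hone j)]
      simp
    have hQlc : ‖Q.leadingCoeff‖ = ∏ j, ‖a j‖ := by
      rw [hQ, leadingCoeff_prod]
      rw [norm_prod]
      apply Finset.prod_congr rfl
      intro j _
      have he : (1 - C ((starRingEnd ℂ) (a j)) * X : ℂ[X])
          = C (-(starRingEnd ℂ) (a j)) * X + C 1 := by rw [map_one, map_neg]; ring
      rw [he, leadingCoeff_linear (by simpa using h0 j)]
      simp
    have hprodpos : 0 < ∏ j, ‖a j‖ :=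
      Finset.prod_pos fun j _ => norm_pos_iff.mpr (h0 j)
    have hprodlt : ∏ j, ‖a j‖ < 1 := by
      calc ∏ j, ‖a j‖ < ∏ _j : Fin d, (1:ℝ) :=
            Finset.prod_lt_prod_of_nonempty (fun j _ => norm_pos_iff.mpr (h0 j))
              (fun j _ => ha j) hne
        _ = 1 := by simp
    rw [norm_div, hPlc, hQlc]
    rw [lt_div_iff₀ hprodpos]
    linarith


/-- A finite Blaschke product `φ = P/Q` of degree `d ≥ 2` (here `P, Q` are the numerator
and denominator polynomials) has a critical point in the exterior of the closed unit disc,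
with a critical value of modulus greater than one; in particular it is not outer regular.
The finite critical points are the zeros of the Wronskian `W = P'Q - PQ'` (a pole `z`, i.e.
a zero of `Q`, which is a zero of `W` is a multiple pole, hence critical with critical
value `∞`); the point `∞` is a critical point exactly when `deg W < 2d - 2`, and the value
there is `∞` (when `deg Q < d`) or the ratio of leading coefficients. -/
theorem stmt_7 (d : ℕ) (hd : 2 ≤ d) (ω : ℂ) (hω : ‖ω‖ = 1)
    (a : Fin d → ℂ) (ha : ∀ j, ‖a j‖ < 1)
    (P Q W : Polynomial ℂ)
    (hP : P = C ω * ∏ j, (C (a j) - X))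
    (hQ : Q = ∏ j, (1 - C ((starRingEnd ℂ) (a j)) * X))
    (hW : W = derivative P * Q - P * derivative Q) :
    (∃ z : ℂ, 1 < ‖z‖ ∧ W.eval z = 0 ∧ (Q.eval z = 0 ∨ 1 < ‖P.eval z / Q.eval z‖))
      ∨ (W.natDegree < 2 * d - 2 ∧ (Q.natDegree < d ∨ 1 < ‖P.leadingCoeff / Q.leadingCoeff‖)) := by
  have hWE : ∀ z : ℂ, W.eval z = ω * ∑ j, (a j * (starRingEnd ℂ) (a j) - 1) *
      ∏ k ∈ Finset.univ.erase j, ((a k - z) * (1 - (starRingEnd ℂ) (a k) * z)) :=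
    W_eval' d ω a P Q W hP hQ hW
  by_cases hout : ∃ z : ℂ, 1 < ‖z‖ ∧ W.eval z = 0
  · obtain ⟨z, hz1, hz2⟩ := hout
    exact Or.inl ⟨z, hz1, hz2, value_lemma' d hd ω hω a ha P Q hP hQ z hz1⟩
  right
  refine ⟨?_, lc_lemma' d hd ω hω a ha P Q hP hQ⟩
  by_cases hW0 : W = 0
  · rw [hW0, natDegree_zero]; omega
  have hall : ∀ r ∈ W.roots, r = 0 := by
    intro r hr
    have hroot : W.eval r = 0 := (mem_roots'.mp hr).2
    by_contra hr0
    rcases lt_trichotomy ‖r‖ 1 with h | h | h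
    · -- reflect the root outside
      have hE := E_lemma' d ω a W hWE hω r hr0
      rw [hroot, map_zero, mul_zero] at hE
      have hu0 : ((starRingEnd ℂ) r) ≠ 0 := by simpa using hr0
      have hev : W.eval (((starRingEnd ℂ) r)⁻¹) = 0 := by
        rcases mul_eq_zero.mp hE with h' | h'
        · exact absurd h' (pow_ne_zero _ hu0)
        · exact h'
      have hrpos : 0 < ‖r‖ := norm_pos_iff.mpr hr0
      have hn : 1 < ‖((starRingEnd ℂ) r)⁻¹‖ := by
        rw [norm_inv, RCLike.norm_conj]
        exact (one_lt_inv₀ hrpos).mpr h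
      exact hout ⟨_, hn, hev⟩
    · exact circle_lemma' d hd ω hω a ha W hWE r h hroot
    · exact hout ⟨r, h, hroot⟩
  have hcard : Multiset.card W.roots = W.natDegree :=
    (splits_iff_card_roots).mp (IsAlgClosed.splits _)
  have hrep : W.roots = Multiset.replicate W.natDegree 0 :=
    Multiset.eq_replicate.mpr ⟨hcard, hall⟩
  have hWX : C W.leadingCoeff * X ^ W.natDegree = W := by
    have h := C_leadingCoeff_mul_prod_multiset_X_sub_C hcard
    rw [hrep] at h
    simpa [Multiset.map_replicate, Multiset.prod_replicate] using h
  have hlc0 : W.leadingCoeff ≠ 0 := leadingCoeff_ne_zero.mpr hW0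
  -- evaluate the functional equation at z = 2
  have hE2 := E_lemma' d ω a W hWE hω 2 two_ne_zero
  have hc2 : (starRingEnd ℂ) (2 : ℂ) = 2 := map_ofNat _ 2
  rw [hc2] at hE2
  have hev1 : W.eval ((2:ℂ)⁻¹) = W.leadingCoeff * (2:ℂ)⁻¹ ^ W.natDegree := by
    conv_lhs => rw [← hWX]
    simp only [eval_mul, eval_C, eval_pow, eval_X]
  have hev2 : W.eval (2:ℂ) = W.leadingCoeff * (2:ℂ) ^ W.natDegree := by
    conv_lhs => rw [← hWX]
    simp only [eval_mul, eval_C, eval_pow, eval_X]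
  rw [hev1, hev2] at hE2
  have hnorm := congrArg norm hE2
  have h2n : ‖(2:ℂ)‖ = 2 := by norm_num
  simp only [norm_mul, norm_pow, norm_inv, RCLike.norm_conj, hω, h2n, one_pow, one_mul] at hnorm
  have hlcpos : 0 < ‖W.leadingCoeff‖ := norm_pos_iff.mpr hlc0
  have hkey : (2:ℝ) ^ (2 * d - 2) * ((2:ℝ)⁻¹) ^ W.natDegree = 2 ^ W.natDegree :=
    mul_right_cancel₀ (ne_of_gt hlcpos) (by linear_combination hnorm)
  have h2pos : (0:ℝ) < 2 ^ W.natDegree := by positivity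
  have hpow2 : (2:ℝ) ^ (2 * d - 2) = 2 ^ (2 * W.natDegree) := by
    rw [two_mul W.natDegree, pow_add]
    rw [inv_pow] at hkey
    field_simp at hkey
    linarith
  have h2d : 2 * d - 2 = 2 * W.natDegree :=
    Nat.pow_right_injective (le_refl 2) (by exact_mod_cast hpow2)
  omega
end

section
/- Let φ(z) = 1/(3 − z − z²). Then φₑ(w) = 3 − 1/w − 1/w², and the functions σ₁(z) = (1 + √(13 − 4z))/(2(3 − z)) and σ₂(z) = (1 − √(13 − 4z))/(2(3 − z)) (principal square root) are holomorphic on the closed unit disc and satisfy φₑ(σⱼ(z)) = z there; moreover σ₁ and σ₂ map the open unit disc into itself and are nonvanishing on the closed unit disc. -/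
open Metric

private lemma sqS (z : ℂ) : ((13 - 4 * z) ^ ((1 : ℂ) / 2)) ^ 2 = 13 - 4 * z := by
  rw [one_div]
  exact_mod_cast Complex.cpow_ofNat_inv_pow (13 - 4 * z) 2

private lemma normS_le {z : ℂ} (hz : ‖z‖ ≤ 1) : 3 ≤ ‖(13 - 4 * z) ^ ((1 : ℂ) / 2)‖ := by
  set s := (13 - 4 * z) ^ ((1 : ℂ) / 2) with hs
  have h2 : ‖s‖ ^ 2 = ‖13 - 4 * z‖ := by rw [← norm_pow, hs, sqS]
  have hb : ‖(13 : ℂ)‖ - ‖4 * z‖ ≤ ‖13 - 4 * z‖ := norm_sub_norm_le _ _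
  have hn : ‖(4 : ℂ) * z‖ = 4 * ‖z‖ := by simp [norm_mul]
  have h13 : ‖(13 : ℂ)‖ = 13 := by simp
  nlinarith [norm_nonneg s, norm_nonneg z]

private lemma normS_lt {z : ℂ} (hz : ‖z‖ < 1) : 3 < ‖(13 - 4 * z) ^ ((1 : ℂ) / 2)‖ := by
  set s := (13 - 4 * z) ^ ((1 : ℂ) / 2) with hs
  have h2 : ‖s‖ ^ 2 = ‖13 - 4 * z‖ := by rw [← norm_pow, hs, sqS]
  have hb : ‖(13 : ℂ)‖ - ‖4 * z‖ ≤ ‖13 - 4 * z‖ := norm_sub_norm_le _ _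
  have hn : ‖(4 : ℂ) * z‖ = 4 * ‖z‖ := by simp [norm_mul]
  have h13 : ‖(13 : ℂ)‖ = 13 := by simp
  nlinarith [norm_nonneg s, norm_nonneg z]

private lemma calc1 (z s : ℂ) (hs2 : s^2 = 13 - 4*z) (_h3 : (3:ℂ)-z ≠ 0) (hp : 1+s ≠ 0) :
    3 - 1/((1+s)/(2*(3-z))) - 1/(((1+s)/(2*(3-z)))^2) = z := by
  field_simp
  linear_combination (3-z)*hs2

private lemma calc2 (z s : ℂ) (hs2 : s^2 = 13 - 4*z) (_h3 : (3:ℂ)-z ≠ 0) (hm : 1-s ≠ 0) :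
    3 - 1/((1-s)/(2*(3-z))) - 1/(((1-s)/(2*(3-z)))^2) = z := by
  field_simp
  linear_combination (3-z)*hs2

/-- Let `φ(z) = 1/(3 - z - z²)`, with exterior map `φₑ = ρ ∘ φ ∘ ρ`, `ρ(z) = 1/conj z`.
Then `φₑ(w) = 3 - 1/w - 1/w²` (for `w ≠ 0`), and the two branches
`σⱼ(z) = (1 ± √(13 - 4z))/(2(3 - z))` (principal square root, realized as `c ^ (1/2)`)
are holomorphic on the closed unit disc, satisfy `φₑ(σⱼ(z)) = z` there, map the open unit
disc into itself, and are nonvanishing on the closed unit disc. -/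
theorem stmt_11 (φ φe σ₁ σ₂ : ℂ → ℂ)
    (hφ : ∀ z, φ z = (3 - z - z ^ 2)⁻¹)
    (hφe : ∀ w, φe w = ((starRingEnd ℂ) (φ ((starRingEnd ℂ) w)⁻¹))⁻¹)
    (hσ₁ : ∀ z, σ₁ z = (1 + (13 - 4 * z) ^ ((1 : ℂ) / 2)) / (2 * (3 - z)))
    (hσ₂ : ∀ z, σ₂ z = (1 - (13 - 4 * z) ^ ((1 : ℂ) / 2)) / (2 * (3 - z))) :
    (∀ w : ℂ, w ≠ 0 → φe w = 3 - 1 / w - 1 / w ^ 2)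
    ∧ (∀ z ∈ closedBall (0 : ℂ) 1, DifferentiableAt ℂ σ₁ z ∧ DifferentiableAt ℂ σ₂ z)
    ∧ (∀ z ∈ closedBall (0 : ℂ) 1, φe (σ₁ z) = z ∧ φe (σ₂ z) = z)
    ∧ Set.MapsTo σ₁ (ball 0 1) (ball 0 1)
    ∧ Set.MapsTo σ₂ (ball 0 1) (ball 0 1)
    ∧ (∀ z ∈ closedBall (0 : ℂ) 1, σ₁ z ≠ 0 ∧ σ₂ z ≠ 0) := by
  have key : ∀ w : ℂ, φe w = 3 - 1 / w - 1 / w ^ 2 := by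
    intro w
    rw [hφe, hφ]
    simp only [map_inv₀, map_sub, map_pow, Complex.conj_conj, map_ofNat, inv_inv]
    ring
  -- basic facts on closed ball
  have fact : ∀ z : ℂ, ‖z‖ ≤ 1 →
      ((13 - 4 * z) ^ ((1 : ℂ) / 2)) ^ 2 = 13 - 4 * z ∧
      (3 : ℂ) - z ≠ 0 ∧
      2 ≤ ‖1 + (13 - 4 * z) ^ ((1 : ℂ) / 2)‖ ∧
      2 ≤ ‖1 - (13 - 4 * z) ^ ((1 : ℂ) / 2)‖ := by
    intro z hz
    set s := (13 - 4 * z) ^ ((1 : ℂ) / 2) with hs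
    have h3 : (3 : ℂ) - z ≠ 0 := by
      intro h
      have hz3 : z = 3 := by linear_combination -h
      rw [hz3] at hz
      norm_num at hz
    have hns : 3 ≤ ‖s‖ := normS_le hz
    have h1 : ‖s‖ ≤ ‖1 + s‖ + 1 := by
      have := norm_sub_le (1 + s) (1 : ℂ)
      have e : (1 + s) - 1 = s := by ring
      rw [e] at this
      simpa using this
    have h2 : ‖s‖ ≤ ‖1 - s‖ + 1 := by
      have := norm_sub_le (1 : ℂ) (1 - s)
      have e : (1 : ℂ) - (1 - s) = s := by ring
      rw [e] at this
      simpa [add_comm] using this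
    exact ⟨sqS z, h3, by linarith, by linarith⟩
  have hne : ∀ z : ℂ, ‖z‖ ≤ 1 → σ₁ z ≠ 0 ∧ σ₂ z ≠ 0 := by
    intro z hz
    obtain ⟨hs2, h3, hp, hm⟩ := fact z hz
    constructor
    · rw [hσ₁]
      apply div_ne_zero
      · intro h; rw [h] at hp; simp at hp; linarith
      · exact mul_ne_zero two_ne_zero h3
    · rw [hσ₂]
      apply div_ne_zero
      · intro h; rw [h] at hm; simp at hm; linarith
      · exact mul_ne_zero two_ne_zero h3
  have hball : ∀ z : ℂ, z ∈ closedBall (0 : ℂ) 1 → ‖z‖ ≤ 1 := by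
    intro z hz; simpa [mem_closedBall, dist_zero_right] using hz
  refine ⟨fun w _ => key w, ?_, ?_, ?_, ?_, fun z hz => hne z (hball z hz)⟩
  · -- differentiability
    intro z hz
    have hz' := hball z hz
    obtain ⟨hs2, h3, hp, hm⟩ := fact z hz'
    have hslit : (13 - 4 * z) ∈ Complex.slitPlane := by
      rw [Complex.mem_slitPlane_iff]
      left
      have := Complex.abs_re_le_norm z
      simp only [Complex.sub_re, Complex.mul_re]
      norm_num
      nlinarith [abs_le.mp (le_trans (Complex.abs_re_le_norm z) hz')]
    have hd : DifferentiableAt ℂ (fun z : ℂ => (13 - 4 * z) ^ ((1 : ℂ) / 2)) z := by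
      apply DifferentiableAt.cpow
      · fun_prop
      · exact differentiableAt_const _
      · exact hslit
    have hden : DifferentiableAt ℂ (fun z : ℂ => 2 * (3 - z)) z := by fun_prop
    have hden0 : 2 * ((3 : ℂ) - z) ≠ 0 := mul_ne_zero two_ne_zero h3
    constructor
    · have : σ₁ = fun z => (1 + (13 - 4 * z) ^ ((1 : ℂ) / 2)) / (2 * (3 - z)) := funext hσ₁
      rw [this]
      exact DifferentiableAt.div ((differentiableAt_const _).add hd) hden hden0
    · have : σ₂ = fun z => (1 - (13 - 4 * z) ^ ((1 : ℂ) / 2)) / (2 * (3 - z)) := funext hσ₂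
      rw [this]
      exact DifferentiableAt.div ((differentiableAt_const _).sub hd) hden hden0
  · -- φe ∘ σⱼ = id
    intro z hz
    have hz' := hball z hz
    obtain ⟨hs2, h3, hp, hm⟩ := fact z hz'
    obtain ⟨hn1, hn2⟩ := hne z hz'
    set s := (13 - 4 * z) ^ ((1 : ℂ) / 2) with hs
    have hp0 : (1 : ℂ) + s ≠ 0 := by intro h; rw [h] at hp; simp at hp; linarith
    have hm0 : (1 : ℂ) - s ≠ 0 := by intro h; rw [h] at hm; simp at hm; linarith
    constructor
    · rw [key, hσ₁]
      exact calc1 z s hs2 h3 hp0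
    · rw [key, hσ₂]
      exact calc2 z s hs2 h3 hm0
  · -- maps to for σ₁
    intro z hz
    have hz' : ‖z‖ < 1 := by simpa [mem_ball, dist_zero_right] using hz
    obtain ⟨hs2, h3, hp, hm⟩ := fact z hz'.le
    set s := (13 - 4 * z) ^ ((1 : ℂ) / 2) with hs
    have hns : 3 < ‖s‖ := normS_lt hz'
    have hm' : 2 < ‖1 - s‖ := by
      have := norm_sub_le (1 : ℂ) (1 - s)
      have e : (1 : ℂ) - (1 - s) = s := by ring
      rw [e, norm_one] at this
      linarith
    have hprod : ‖1 + s‖ * ‖1 - s‖ = 4 * ‖3 - z‖ := by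
      have e : (1 + s) * (1 - s) = -(4 * ((3 : ℂ) - z)) := by linear_combination -hs2
      have := congrArg (fun x : ℂ => ‖x‖) e
      simpa [norm_mul] using this
    have h3n : (0 : ℝ) < ‖(3 : ℂ) - z‖ := norm_pos_iff.mpr h3
    rw [mem_ball, dist_zero_right, hσ₁, norm_div, norm_mul]
    have h2n : ‖(2 : ℂ)‖ = 2 := by simp
    rw [h2n, div_lt_one (by positivity)]
    nlinarith [norm_nonneg (1 + s)]
  · -- maps to for σ₂
    intro z hz
    have hz' : ‖z‖ < 1 := by simpa [mem_ball, dist_zero_right] using hz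
    obtain ⟨hs2, h3, hp, hm⟩ := fact z hz'.le
    set s := (13 - 4 * z) ^ ((1 : ℂ) / 2) with hs
    have hns : 3 < ‖s‖ := normS_lt hz'
    have hp' : 2 < ‖1 + s‖ := by
      have := norm_sub_le (1 + s) (1 : ℂ)
      have e : (1 + s) - 1 = s := by ring
      rw [e, norm_one] at this
      linarith
    have hprod : ‖1 + s‖ * ‖1 - s‖ = 4 * ‖3 - z‖ := by
      have e : (1 + s) * (1 - s) = -(4 * ((3 : ℂ) - z)) := by linear_combination -hs2
      have := congrArg (fun x : ℂ => ‖x‖) e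
      simpa [norm_mul] using this
    have h3n : (0 : ℝ) < ‖(3 : ℂ) - z‖ := norm_pos_iff.mpr h3
    rw [mem_ball, dist_zero_right, hσ₂, norm_div, norm_mul]
    have h2n : ‖(2 : ℂ)‖ = 2 := by simp
    rw [h2n, div_lt_one (by positivity)]
    nlinarith [norm_nonneg (1 - s)]
end

section
/- Let φ(z) = z²/(3 − z − z²), σ₁(z) = (1 + √(13 + 12z))/6 and σ₂(z) = (1 − √(13 + 12z))/6 with the principal square root. Then σ₁ and σ₂ are holomorphic on the closed unit disc and are the branches of φₑ⁻¹; the weight g₁(z) = zσ₁'(z)/σ₁(z) is bounded on 𝕌, while g₂(z) = zσ₂'(z)/σ₂(z) has a simple pole at z = −1 (since σ₂(−1) = 0). -/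
open Metric

/-- Let `φ(z) = z²/(3 - z - z²)`, with exterior map `φₑ(w) = 3w² - w - 1`
(`φₑ = ρ ∘ φ ∘ ρ` away from `w = 0`), and `σⱼ(z) = (1 ± √(13 + 12z))/6` (principal square
root).  Then `σ₁, σ₂` are holomorphic on the closed unit disc and are the branches of
`φₑ⁻¹`; the weight `g₁(z) = zσ₁'(z)/σ₁(z)` is bounded on the unit disc, while
`g₂(z) = zσ₂'(z)/σ₂(z)` has a simple pole at `z = -1` (indeed `σ₂(-1) = 0` and
`(z+1)g₂(z)` tends to a nonzero limit as `z → -1`). -/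
theorem stmt_13 (φ φe σ₁ σ₂ g₁ g₂ : ℂ → ℂ)
    (hφ : ∀ z, φ z = z ^ 2 / (3 - z - z ^ 2))
    (hφe : ∀ w, φe w = 3 * w ^ 2 - w - 1)
    (hσ₁ : ∀ z, σ₁ z = (1 + (13 + 12 * z) ^ ((1 : ℂ) / 2)) / 6)
    (hσ₂ : ∀ z, σ₂ z = (1 - (13 + 12 * z) ^ ((1 : ℂ) / 2)) / 6)
    (hg₁ : ∀ z, g₁ z = z * deriv σ₁ z / σ₁ z)
    (hg₂ : ∀ z, g₂ z = z * deriv σ₂ z / σ₂ z) :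
    (∀ w : ℂ, w ≠ 0 → ((starRingEnd ℂ) (φ ((starRingEnd ℂ) w)⁻¹))⁻¹ = φe w)
    ∧ (∀ z ∈ closedBall (0 : ℂ) 1, DifferentiableAt ℂ σ₁ z ∧ DifferentiableAt ℂ σ₂ z)
    ∧ (∀ z : ℂ, φe (σ₁ z) = z ∧ φe (σ₂ z) = z)
    ∧ (∃ M : ℝ, ∀ z ∈ ball (0 : ℂ) 1, ‖g₁ z‖ ≤ M)
    ∧ σ₂ (-1) = 0
    ∧ (∃ L : ℂ, L ≠ 0 ∧
        Filter.Tendsto (fun z => (z + 1) * g₂ z) (nhdsWithin (-1) {(-1 : ℂ)}ᶜ) (nhds L)) := by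
  -- square of the principal square root
  have hsq : ∀ z : ℂ, ((13 + 12*z) ^ ((1:ℂ)/2))^2 = 13 + 12*z := by
    intro z
    rw [show ((1:ℂ)/2) = (((2:ℕ):ℂ))⁻¹ by norm_num]
    exact Complex.cpow_nat_inv_pow _ two_ne_zero
  -- real part positivity on the closed ball
  have hre : ∀ z ∈ closedBall (0:ℂ) 1, 0 < (13 + 12*z).re := by
    intro z hz
    simp only [mem_closedBall, dist_zero_right] at hz
    have h1 : |z.re| ≤ 1 := (Complex.abs_re_le_norm z).trans hz
    have h2 := abs_le.mp h1
    simp only [Complex.add_re, Complex.mul_re]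
    norm_num
    linarith [h2.1]
  -- differentiability of the square root factor
  have hdiffS : ∀ c : ℂ, ∀ z : ℂ, 0 < (13 + 12*z).re →
      DifferentiableAt ℂ (fun z : ℂ => (13 + 12*z) ^ c) z := by
    intro c z hz
    exact DifferentiableAt.cpow (by fun_prop) (differentiableAt_const _) (Or.inl hz)
  -- derivative of σ₂
  have hD₂ : ∀ z : ℂ, 0 < (13 + 12*z).re →
      HasDerivAt σ₂ (-((1:ℂ)/2 * (13 + 12*z)^((1:ℂ)/2 - 1) * 12)/6) z := by
    intro z hz
    have h1 : HasDerivAt (fun z : ℂ => 13 + 12*z) 12 z := by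
      simpa using ((hasDerivAt_id z).const_mul (12:ℂ)).const_add (13:ℂ)
    have h2 := h1.cpow_const (c := (1:ℂ)/2) (Or.inl hz)
    have h3 := ((hasDerivAt_const z (1:ℂ)).sub h2).div_const 6
    have : σ₂ = fun z => (1 - (13 + 12 * z) ^ ((1 : ℂ) / 2)) / 6 := funext hσ₂
    rw [this]
    exact h3.congr_deriv (by ring)
  -- derivative of σ₁
  have hD₁ : ∀ z : ℂ, 0 < (13 + 12*z).re →
      HasDerivAt σ₁ (((1:ℂ)/2 * (13 + 12*z)^((1:ℂ)/2 - 1) * 12)/6) z := by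
    intro z hz
    have h1 : HasDerivAt (fun z : ℂ => 13 + 12*z) 12 z := by
      simpa using ((hasDerivAt_id z).const_mul (12:ℂ)).const_add (13:ℂ)
    have h2 := h1.cpow_const (c := (1:ℂ)/2) (Or.inl hz)
    have h3 := ((hasDerivAt_const z (1:ℂ)).add h2).div_const 6
    have : σ₁ = fun z => (1 + (13 + 12 * z) ^ ((1 : ℂ) / 2)) / 6 := funext hσ₁
    rw [this]
    exact h3.congr_deriv (by ring)
  -- nonvanishing of σ₁ on the closed ball
  have hσ₁ne : ∀ z ∈ closedBall (0:ℂ) 1, σ₁ z ≠ 0 := by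
    intro z hz h
    rw [hσ₁] at h
    have hs : (13 + 12*z) ^ ((1:ℂ)/2) = -1 := by
      have := div_eq_zero_iff.mp h
      rcases this with h' | h'
      · linear_combination h'
      · norm_num at h'
    have h13 : (13 : ℂ) + 12*z = 1 := by
      have := hsq z
      rw [hs] at this
      linear_combination -this
    have hz1 : z = -1 := by linear_combination h13 / 12
    rw [hz1] at hs
    norm_num [Complex.one_cpow] at hs
  refine ⟨?_, ?_, ?_, ?_, ?_, ?_⟩
  · -- φe = ρ ∘ φ ∘ ρ
    intro w hw
    rw [hφ, hφe]
    simp only [map_div₀, map_sub, map_pow, map_inv₀, Complex.conj_conj, map_ofNat]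
    rw [inv_div]
    field_simp
  · -- differentiability on the closed ball
    intro z hz
    have hz' := hre z hz
    exact ⟨(hD₁ z hz').differentiableAt, (hD₂ z hz').differentiableAt⟩
  · -- branches of φe⁻¹
    intro z
    constructor
    · rw [hφe, hσ₁]
      linear_combination (hsq z) / 12
    · rw [hφe, hσ₂]
      linear_combination (hsq z) / 12
  · -- boundedness of g₁
    set G : ℂ → ℂ := fun z =>
      z * (((1:ℂ)/2 * (13 + 12*z)^((1:ℂ)/2 - 1) * 12)/6) / σ₁ z with hG
    have hcont : ContinuousOn G (closedBall (0:ℂ) 1) := by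
      apply ContinuousOn.div
      · apply ContinuousOn.mul continuousOn_id
        intro z hz
        have hd := (((hdiffS ((1:ℂ)/2 - 1) z (hre z hz)).const_mul ((1:ℂ)/2)).mul_const (12:ℂ)).div_const (6:ℂ)
        exact hd.continuousAt.continuousWithinAt
      · intro z hz
        rw [funext hσ₁]
        exact (((differentiableAt_const _).add (hdiffS _ z (hre z hz))).div_const _).continuousAt.continuousWithinAt
      · exact hσ₁ne
    obtain ⟨M, hM⟩ := (isCompact_closedBall (0:ℂ) 1).exists_bound_of_continuousOn hcont
    refine ⟨M, fun z hz => ?_⟩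
    have hz' : z ∈ closedBall (0:ℂ) 1 := ball_subset_closedBall hz
    have : g₁ z = G z := by
      rw [hg₁, hG, (hD₁ z (hre z hz')).deriv]
    rw [this]
    exact hM z hz'
  · -- σ₂(-1) = 0
    rw [hσ₂]
    norm_num [Complex.one_cpow]
  · -- the simple pole of g₂ at -1
    refine ⟨-1, by norm_num, ?_⟩
    set F : ℂ → ℂ := fun z =>
      z * ((13 + 12*z)^((1:ℂ)/2) + 1) / (2 * (13 + 12*z)^((1:ℂ)/2)) with hF
    have hFc : ContinuousAt F (-1) := by
      have hs : ((13:ℂ) + 12*(-1)) = 1 := by norm_num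
      have hcs : ContinuousAt (fun z : ℂ => (13 + 12*z)^((1:ℂ)/2)) (-1) :=
        (hdiffS _ (-1) (by norm_num)).continuousAt
      apply ContinuousAt.div
      · exact continuousAt_id.mul (hcs.add continuousAt_const)
      · exact continuousAt_const.mul hcs
      · have hone : ((13:ℂ) + 12*(-1))^((1:ℂ)/2) = 1 := by norm_num [Complex.one_cpow]
        show (2:ℂ) * ((13:ℂ) + 12*(-1))^((1:ℂ)/2) ≠ 0
        rw [hone]; norm_num
    have hFval : F (-1) = -1 := by
      have hs : ((13:ℂ) + 12*(-1)) = 1 := by norm_num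
      simp only [hF]
      rw [hs, Complex.one_cpow]
      norm_num
    have hmain : Filter.Tendsto F (nhdsWithin (-1) {(-1 : ℂ)}ᶜ) (nhds (-1)) := by
      have h := hFc.tendsto.mono_left (nhdsWithin_le_nhds (s := {(-1:ℂ)}ᶜ))
      rwa [hFval] at h
    apply hmain.congr'
    have hmem : {z : ℂ | 0 < (13 + 12*z).re} ∈ nhdsWithin (-1) {(-1 : ℂ)}ᶜ := by
      apply nhdsWithin_le_nhds
      exact (isOpen_lt continuous_const (Complex.continuous_re.comp (by fun_prop))).mem_nhds
        (by norm_num)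
    filter_upwards [hmem, self_mem_nhdsWithin] with z hz hz1
    -- z ≠ -1, and re(13+12z) > 0
    have hz1' : z ≠ -1 := hz1
    set s := (13 + 12*z)^((1:ℂ)/2) with hs
    have hs2 : s^2 = 13 + 12*z := hsq z
    have h13 : (13:ℂ) + 12*z ≠ 0 := by
      intro h
      rw [h] at hz
      simp at hz
    have hs0 : s ≠ 0 := by
      intro h
      rw [h] at hs2
      exact h13 (by linear_combination -hs2)
    have hs1 : (1:ℂ) - s ≠ 0 := by
      intro h
      have hseq : s = 1 := by linear_combination -h
      rw [hseq] at hs2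
      exact hz1' (by linear_combination -hs2 / 12)
    have hder : deriv σ₂ z = -((1:ℂ)/2 * (13 + 12*z)^((1:ℂ)/2 - 1) * 12)/6 :=
      (hD₂ z hz).deriv
    have hneg : (13 + 12*z)^((1:ℂ)/2 - 1) = s⁻¹ := by
      rw [show ((1:ℂ)/2 - 1) = -((1:ℂ)/2) by norm_num, Complex.cpow_neg]
    rw [hF, hg₂, hder, hneg, hσ₂]
    have key : ∀ w t : ℂ, t^2 = 13 + 12*w → t ≠ 0 → (1:ℂ) - t ≠ 0 →
        (w + 1) * (w * (-((1:ℂ)/2 * t⁻¹ * 12)/6) / ((1 - t)/6)) = w * (t + 1) / (2*t) := by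
      intro w t h2' h0' h1'
      field_simp
      linear_combination w * h2'
    rw [← hs]
    exact (key z s hs2 hs0 hs1).symm
end

section
/- For d ≥ 2, the map φ(z) = 1/((d+1) − z − z² − ⋯ − z^d) sends the closed unit disc into 𝕌 ∪ {1}, taking 1 to 1 and every other point of the unit circle into the open unit disc 𝕌. -/
open Metric

lemma re_lt_one_aux {z : ℂ} (hz : ‖z‖ ≤ 1) (hz1 : z ≠ 1) : z.re < 1 := by
  rcases lt_or_eq_of_le ((Complex.re_le_norm z).trans hz) with h | h
  · exact h
  · exfalso
    apply hz1
    have hsq : z.re ^ 2 + z.im ^ 2 ≤ 1 := by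
      have h2 : ‖z‖ ≤ 1 := hz
      have h3 := Complex.sq_norm z
      rw [Complex.normSq_apply] at h3
      nlinarith [norm_nonneg z]
    have him : z.im = 0 := by nlinarith
    exact Complex.ext (by simp [h]) (by simp [him])

lemma key_norm (d : ℕ) (hd : 2 ≤ d) {z : ℂ} (hz : ‖z‖ ≤ 1) (hz1 : z ≠ 1) :
    1 < ‖((d : ℂ) + 1) - ∑ k ∈ Finset.Icc 1 d, z ^ k‖ := by
  have hre : (∑ k ∈ Finset.Icc 1 d, z ^ k).re < d := by
    rw [Complex.re_sum]
    have hlt : ∑ k ∈ Finset.Icc 1 d, (z ^ k).re < ∑ k ∈ Finset.Icc 1 d, (1 : ℝ) := by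
      apply Finset.sum_lt_sum
      · intro k hk
        refine (Complex.re_le_norm _).trans ?_
        calc (‖z ^ k‖ : ℝ) = ‖z‖ ^ k := by rw [← norm_pow]
          _ ≤ 1 := pow_le_one₀ (norm_nonneg z) hz
      · refine ⟨1, ?_, by simpa using re_lt_one_aux hz hz1⟩
        simp [Finset.mem_Icc]; omega
    calc ∑ k ∈ Finset.Icc 1 d, (z ^ k).re < ∑ k ∈ Finset.Icc 1 d, (1 : ℝ) := hlt
      _ = d := by simp [Nat.card_Icc]
  have hw : 1 < (((d : ℂ) + 1) - ∑ k ∈ Finset.Icc 1 d, z ^ k).re := by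
    simp only [Complex.sub_re, Complex.add_re, Complex.natCast_re, Complex.one_re]
    linarith
  exact hw.trans_le (Complex.re_le_norm _)

/-- For `d ≥ 2`, the map `φ(z) = 1/((d+1) - z - z² - ⋯ - z^d)` sends the closed unit disc
into `𝕌 ∪ {1}`, taking `1` to `1` and every other point of the unit circle into the open
unit disc `𝕌`. -/
theorem stmt_16 (d : ℕ) (hd : 2 ≤ d) (φ : ℂ → ℂ)
    (hφ : ∀ z, φ z = (((d : ℂ) + 1) - ∑ k ∈ Finset.Icc 1 d, z ^ k)⁻¹) :
    Set.MapsTo φ (closedBall 0 1) (ball 0 1 ∪ {1})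
    ∧ φ 1 = 1
    ∧ (∀ z : ℂ, ‖z‖ = 1 → z ≠ 1 → φ z ∈ ball (0 : ℂ) 1) := by
  have hφ1 : φ 1 = 1 := by
    rw [hφ]
    have : ∑ k ∈ Finset.Icc 1 d, (1 : ℂ) ^ k = d := by
      simp [Nat.card_Icc]
    rw [this]
    simp
  have hball : ∀ z : ℂ, ‖z‖ ≤ 1 → z ≠ 1 → φ z ∈ ball (0 : ℂ) 1 := by
    intro z hz hz1
    have h := key_norm d hd hz hz1
    rw [mem_ball_zero_iff, hφ, norm_inv]
    exact inv_lt_one_of_one_lt₀ h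
  refine ⟨?_, hφ1, fun z hz hz1 => hball z hz.le hz1⟩
  intro z hz
  rw [mem_closedBall_zero_iff] at hz
  by_cases hz1 : z = 1
  · right; simp [hz1, hφ1]
  · left; exact hball z hz hz1
end
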